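/- Assume Σ_{t=1}^{T} E[Y_t·A_t] > 0 and Σ_{t=1}^{T} E[Y_t·(1 − A_t)] > 0. Then β' := log( (Σ_{t=1}^{T} E[Y_t·A_t]/p) / (Σ_{t=1}^{T} E[Y_t·(1 − A_t)]/(1 − p)) ) is the unique real number β satisfying the population marginal estimating equation Σ_{t=1}^{T} E[ e^{−A_t β} · (Y_t − e^{c_t + A_t β}) · J_t · (A_t − p̃) ] = 0, where J_t := (p̃/p)^{A_t}·((1 − p̃)/(1 − p))^{1 − A_t}, for any choice of ℋ_t-measurable real random variables c_t with e^{c_t} integrable. Moreover, if P(A_t = 1) = p for each t, then β' = log( Σ_{t=1}^{T} E[Y_t | A_t = 1] / Σ_{t=1}^{T} E[Y_t | A_t = 0] ). -/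

import Mathlib

open MeasureTheory ProbabilityTheory Real

/-- probability limit of the EMEE estimator under a constant,
fully marginal excursion effect model with `Δ = 1`.
For `t = 1, …, T` let `ℋ_t ⊆ ℱ` be sub-σ-algebras, `A_t` `{0,1}`-valued treatments with
constant randomization probability `E[A_t | ℋ_t] = p ∈ (0,1)` a.s., `Y_t` bounded
nonnegative proximal outcomes, and `p̃ ∈ (0,1)` a fixed centering probability.  Assume
`Σ_t E[Y_t A_t] > 0` and `Σ_t E[Y_t(1 − A_t)] > 0`.  Then
`β' := log((Σ_t E[Y_t A_t]/p)/(Σ_t E[Y_t(1 − A_t)]/(1 − p)))` is the unique real `β`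
solving the population marginal estimating equation
`Σ_t E[e^{−A_t β}(Y_t − e^{c_t + A_t β})·J_t·(A_t − p̃)] = 0`, where
`J_t := (p̃/p)^{A_t}((1 − p̃)/(1 − p))^{1 − A_t}`, for any ℋ_t-measurable `c_t` with
`e^{c_t}` integrable.  Moreover, if `P(A_t = 1) = p` for each `t`, then
`β' = log(Σ_t E[Y_t | A_t = 1] / Σ_t E[Y_t | A_t = 0])`. -/
theorem emee_probability_limit
    {Ω : Type*} {m0 : MeasurableSpace Ω} (μ : Measure Ω) [IsProbabilityMeasure μ]
    (T : ℕ) (mH : ℕ → MeasurableSpace Ω) (hmH : ∀ t ∈ Finset.Icc 1 T, mH t ≤ m0)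
    (A : ℕ → Ω → ℝ) (hA : ∀ t ∈ Finset.Icc 1 T, Measurable (A t))
    (hA01 : ∀ t ∈ Finset.Icc 1 T, ∀ ω, A t ω = 0 ∨ A t ω = 1)
    (p : ℝ) (hp : 0 < p ∧ p < 1)
    (hrand : ∀ t ∈ Finset.Icc 1 T, μ[A t|mH t] =ᵐ[μ] fun _ => p)
    (Y : ℕ → Ω → ℝ) (hYmeas : ∀ t ∈ Finset.Icc 1 T, Measurable (Y t))
    (hY0 : ∀ t ∈ Finset.Icc 1 T, ∀ ω, 0 ≤ Y t ω)
    (hYbd : ∃ C, ∀ t ∈ Finset.Icc 1 T, ∀ ω, Y t ω ≤ C)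
    (ptil : ℝ) (hptil : 0 < ptil ∧ ptil < 1)
    (hnum : 0 < ∑ t ∈ Finset.Icc 1 T, ∫ ω, Y t ω * A t ω ∂μ)
    (hden : 0 < ∑ t ∈ Finset.Icc 1 T, ∫ ω, Y t ω * (1 - A t ω) ∂μ)
    (c : ℕ → Ω → ℝ) (hc : ∀ t ∈ Finset.Icc 1 T, StronglyMeasurable[mH t] (c t))
    (hcInt : ∀ t ∈ Finset.Icc 1 T, Integrable (fun ω => exp (c t ω)) μ) :
    (∀ β : ℝ,
      (∑ t ∈ Finset.Icc 1 T, ∫ ω, exp (-(A t ω * β)) *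
          (Y t ω - exp (c t ω + A t ω * β)) *
          ((ptil / p) ^ (A t ω) * ((1 - ptil) / (1 - p)) ^ (1 - A t ω)) *
          (A t ω - ptil) ∂μ) = 0 ↔
        β = log ((∑ t ∈ Finset.Icc 1 T, (∫ ω, Y t ω * A t ω ∂μ) / p) /
          (∑ t ∈ Finset.Icc 1 T, (∫ ω, Y t ω * (1 - A t ω) ∂μ) / (1 - p)))) ∧
    ((∀ t ∈ Finset.Icc 1 T, μ {ω | A t ω = 1} = ENNReal.ofReal p) →
      log ((∑ t ∈ Finset.Icc 1 T, (∫ ω, Y t ω * A t ω ∂μ) / p) /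
          (∑ t ∈ Finset.Icc 1 T, (∫ ω, Y t ω * (1 - A t ω) ∂μ) / (1 - p)))
        = log ((∑ t ∈ Finset.Icc 1 T, ∫ ω, Y t ω ∂(μ[|{ω | A t ω = 1}])) /
            (∑ t ∈ Finset.Icc 1 T, ∫ ω, Y t ω ∂(μ[|{ω | A t ω = 0}])))) := by
  obtain ⟨hp0, hp1⟩ := hp
  obtain ⟨hq0, hq1⟩ := hptil
  obtain ⟨C, hC⟩ := hYbd
  have hp1' : (0:ℝ) < 1 - p := by linarith
  -- basic integrability facts
  have hAbd : ∀ t ∈ Finset.Icc 1 T, ∀ ω, ‖A t ω‖ ≤ 1 := by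
    intro t ht ω; rcases hA01 t ht ω with h | h <;> simp [h]
  have hAint : ∀ t ∈ Finset.Icc 1 T, Integrable (A t) μ := by
    intro t ht
    exact (integrable_const (1:ℝ)).mono' (hA t ht).aestronglyMeasurable
      (ae_of_all _ (hAbd t ht))
  have hYint : ∀ t ∈ Finset.Icc 1 T, Integrable (Y t) μ := by
    intro t ht
    refine (integrable_const (max C 0)).mono' (hYmeas t ht).aestronglyMeasurable
      (ae_of_all _ fun ω => ?_)
    rw [Real.norm_eq_abs, abs_of_nonneg (hY0 t ht ω)]
    exact le_max_of_le_left (hC t ht ω)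
  have hYAint : ∀ t ∈ Finset.Icc 1 T, Integrable (fun ω => Y t ω * A t ω) μ := by
    intro t ht
    refine (integrable_const (max C 0)).mono'
      ((hYmeas t ht).mul (hA t ht)).aestronglyMeasurable (ae_of_all _ fun ω => ?_)
    rcases hA01 t ht ω with h | h <;>
      simp [h, Real.norm_eq_abs, abs_of_nonneg (hY0 t ht ω), le_max_iff, hC t ht ω]
  have hAecInt : ∀ t ∈ Finset.Icc 1 T, Integrable (fun ω => A t ω * exp (c t ω)) μ := by
    intro t ht
    exact (hcInt t ht).bdd_mul (hA t ht).aestronglyMeasurable (ae_of_all _ (hAbd t ht))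
  have hY1Aint : ∀ t ∈ Finset.Icc 1 T, Integrable (fun ω => Y t ω * (1 - A t ω)) μ := by
    intro t ht
    have : (fun ω => Y t ω * (1 - A t ω)) = fun ω => Y t ω - Y t ω * A t ω := by
      funext ω; ring
    rw [this]; exact (hYint t ht).sub (hYAint t ht)
  have hY1A : ∀ t ∈ Finset.Icc 1 T,
      (∫ ω, Y t ω * (1 - A t ω) ∂μ) = (∫ ω, Y t ω ∂μ) - ∫ ω, Y t ω * A t ω ∂μ := by
    intro t ht
    rw [← integral_sub (hYint t ht) (hYAint t ht)]
    congr 1; funext ω; ring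
  -- conditional expectation step
  have hec : ∀ t ∈ Finset.Icc 1 T,
      (∫ ω, A t ω * exp (c t ω) ∂μ) = p * ∫ ω, exp (c t ω) ∂μ := by
    intro t ht
    have hm := hmH t ht
    haveI : SigmaFinite (μ.trim hm) := by
      have : IsFiniteMeasure (μ.trim hm) := isFiniteMeasure_trim hm
      infer_instance
    have hcm : StronglyMeasurable[mH t] (fun ω => exp (c t ω)) :=
      Real.continuous_exp.comp_stronglyMeasurable (hc t ht)
    have hint : Integrable ((fun ω => exp (c t ω)) * A t) μ := by
      have := hAecInt t ht
      have he : ((fun ω => exp (c t ω)) * A t) = fun ω => A t ω * exp (c t ω) := by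
        funext ω; simp [mul_comm]
      rw [he]; exact this
    have hpull := condExp_mul_of_stronglyMeasurable_left (m := mH t) (μ := μ) hcm hint (hAint t ht)
    have h1 : (∫ ω, A t ω * exp (c t ω) ∂μ)
        = ∫ ω, ((fun ω => exp (c t ω)) * A t) ω ∂μ := by
      congr 1; funext ω; simp [mul_comm]
    rw [h1, ← integral_condExp hm]
    have h2 : μ[(fun ω => exp (c t ω)) * A t|mH t]
        =ᵐ[μ] fun ω => exp (c t ω) * p := by
      refine hpull.trans ?_
      filter_upwards [hrand t ht] with ω hω
      simp [hω]
    rw [integral_congr_ae h2]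
    rw [integral_mul_const, mul_comm]
  -- the per-term computation
  have hterm : ∀ β : ℝ, ∀ t ∈ Finset.Icc 1 T,
      (∫ ω, exp (-(A t ω * β)) * (Y t ω - exp (c t ω + A t ω * β)) *
          ((ptil / p) ^ (A t ω) * ((1 - ptil) / (1 - p)) ^ (1 - A t ω)) *
          (A t ω - ptil) ∂μ)
      = ptil * (1 - ptil) *
          (exp (-β) * (∫ ω, Y t ω * A t ω ∂μ) / p
            - (∫ ω, Y t ω * (1 - A t ω) ∂μ) / (1 - p)) := by
    intro β t ht
    have hpt : ∀ ω, exp (-(A t ω * β)) * (Y t ω - exp (c t ω + A t ω * β)) *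
          ((ptil / p) ^ (A t ω) * ((1 - ptil) / (1 - p)) ^ (1 - A t ω)) *
          (A t ω - ptil)
        = ((ptil * (1 - ptil) / p * exp (-β) + ptil * (1 - ptil) / (1 - p)) * (Y t ω * A t ω)
            + (-(ptil * (1 - ptil) / p + ptil * (1 - ptil) / (1 - p))) * (A t ω * exp (c t ω)))
          + ((-(ptil * (1 - ptil) / (1 - p))) * Y t ω
            + (ptil * (1 - ptil) / (1 - p)) * exp (c t ω)) := by
      intro ω
      have hp1'' : (1:ℝ) - p ≠ 0 := ne_of_gt hp1'
      rcases hA01 t ht ω with h | h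
      · simp only [h, zero_mul, neg_zero, exp_zero, add_zero, sub_zero, Real.rpow_zero,
          Real.rpow_one, one_mul, mul_zero, zero_sub, mul_one]
        field_simp
        ring
      · simp only [h, one_mul, sub_self, Real.rpow_zero, Real.rpow_one, mul_one]
        rw [Real.exp_add, Real.exp_neg]
        have hb := Real.exp_ne_zero β
        field_simp
        ring
    rw [integral_congr_ae (ae_of_all _ hpt)]
    have i1 : Integrable (fun ω => (ptil * (1 - ptil) / p * exp (-β)
        + ptil * (1 - ptil) / (1 - p)) * (Y t ω * A t ω)) μ := (hYAint t ht).const_mul _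
    have i2 : Integrable (fun ω => (-(ptil * (1 - ptil) / p + ptil * (1 - ptil) / (1 - p)))
        * (A t ω * exp (c t ω))) μ := (hAecInt t ht).const_mul _
    have i3 : Integrable (fun ω => (-(ptil * (1 - ptil) / (1 - p))) * Y t ω) μ :=
      (hYint t ht).const_mul _
    have i4 : Integrable (fun ω => (ptil * (1 - ptil) / (1 - p)) * exp (c t ω)) μ :=
      (hcInt t ht).const_mul _
    rw [integral_add
        (f := fun ω => (ptil * (1 - ptil) / p * exp (-β)
            + ptil * (1 - ptil) / (1 - p)) * (Y t ω * A t ω)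
          + (-(ptil * (1 - ptil) / p + ptil * (1 - ptil) / (1 - p))) * (A t ω * exp (c t ω)))
        (g := fun ω => (-(ptil * (1 - ptil) / (1 - p))) * Y t ω
          + (ptil * (1 - ptil) / (1 - p)) * exp (c t ω))
        (by exact i1.add i2) (by exact i3.add i4),
      integral_add i1 i2, integral_add i3 i4,
      integral_const_mul, integral_const_mul, integral_const_mul, integral_const_mul,
      hec t ht, hY1A t ht]
    have hp1'' : (1:ℝ) - p ≠ 0 := ne_of_gt hp1'
    field_simp
    ring
  -- abbreviations
  set N : ℝ := ∑ t ∈ Finset.Icc 1 T, (∫ ω, Y t ω * A t ω ∂μ) / p with hNdef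
  set D : ℝ := ∑ t ∈ Finset.Icc 1 T, (∫ ω, Y t ω * (1 - A t ω) ∂μ) / (1 - p) with hDdef
  have hNpos : 0 < N := by
    rw [hNdef, ← Finset.sum_div]; exact div_pos hnum hp0
  have hDpos : 0 < D := by
    rw [hDdef, ← Finset.sum_div]; exact div_pos hden hp1'
  have hsum : ∀ β : ℝ,
      (∑ t ∈ Finset.Icc 1 T, ∫ ω, exp (-(A t ω * β)) *
          (Y t ω - exp (c t ω + A t ω * β)) *
          ((ptil / p) ^ (A t ω) * ((1 - ptil) / (1 - p)) ^ (1 - A t ω)) *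
          (A t ω - ptil) ∂μ)
      = ptil * (1 - ptil) * (exp (-β) * N - D) := by
    intro β
    rw [Finset.sum_congr rfl (hterm β), ← Finset.mul_sum, Finset.sum_sub_distrib]
    congr 1
    rw [hNdef, hDdef]
    congr 1
    rw [Finset.mul_sum]
    refine Finset.sum_congr rfl fun t ht => ?_
    rw [mul_div_assoc]
  constructor
  · intro β
    rw [hsum β]
    have hne : ptil * (1 - ptil) ≠ 0 := mul_ne_zero (ne_of_gt hq0) (by linarith)
    constructor
    · intro h
      have h2 : exp (-β) * N - D = 0 := by
        rcases mul_eq_zero.mp h with h' | h'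
        · exact absurd h' hne
        · exact h'
      have hB := Real.exp_ne_zero β
      rw [Real.exp_neg] at h2
      have h4 : N = exp β * D := by
        field_simp at h2
        linarith
      have h3 : exp β = N / D := by
        rw [h4, mul_div_assoc, div_self (ne_of_gt hDpos), mul_one]
      rw [← h3, Real.log_exp]
    · intro h
      subst h
      rw [Real.exp_neg, Real.exp_log (div_pos hNpos hDpos)]
      have h5 : (N / D)⁻¹ * N - D = 0 := by
        field_simp
        ring
      rw [h5, mul_zero]
  · intro hAp
    congr 2
    · refine Finset.sum_congr rfl fun t ht => ?_
      have hs1 : MeasurableSet {ω | A t ω = 1} := by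
        have : {ω | A t ω = 1} = A t ⁻¹' {1} := by ext ω; simp
        rw [this]; exact hA t ht (measurableSet_singleton 1)
      rw [ProbabilityTheory.cond, integral_smul_measure, hAp t ht]
      have hi : ∫ ω in {ω | A t ω = 1}, Y t ω ∂μ = ∫ ω, Y t ω * A t ω ∂μ := by
        rw [← integral_indicator hs1]
        congr 1; funext ω
        rcases hA01 t ht ω with h | h
        · rw [Set.indicator_of_notMem (by simp [h]), h, mul_zero]
        · rw [Set.indicator_of_mem (by simpa using h), h, mul_one]
      rw [smul_eq_mul, hi, ENNReal.toReal_inv, ENNReal.toReal_ofReal hp0.le,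
        div_eq_inv_mul]
    · refine Finset.sum_congr rfl fun t ht => ?_
      have hs1 : MeasurableSet {ω | A t ω = 1} := by
        have : {ω | A t ω = 1} = A t ⁻¹' {1} := by ext ω; simp
        rw [this]; exact hA t ht (measurableSet_singleton 1)
      have hcompl : {ω | A t ω = 0} = {ω | A t ω = 1}ᶜ := by
        ext ω
        rcases hA01 t ht ω with h | h <;> simp [h]
      have hs0 : MeasurableSet {ω | A t ω = 0} := by rw [hcompl]; exact hs1.compl
      have hμ0 : μ {ω | A t ω = 0} = ENNReal.ofReal (1 - p) := by
        rw [hcompl, prob_compl_eq_one_sub hs1, hAp t ht]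
        rw [← ENNReal.ofReal_one, ← ENNReal.ofReal_sub _ hp0.le]
      rw [ProbabilityTheory.cond, integral_smul_measure, hμ0]
      have hi : ∫ ω in {ω | A t ω = 0}, Y t ω ∂μ = ∫ ω, Y t ω * (1 - A t ω) ∂μ := by
        rw [← integral_indicator hs0]
        congr 1; funext ω
        rcases hA01 t ht ω with h | h
        · rw [Set.indicator_of_mem (by simpa using h), h]; ring
        · rw [Set.indicator_of_notMem (by simp [h]), h]; ring
      rw [smul_eq_mul, hi, ENNReal.toReal_inv, ENNReal.toReal_ofReal hp1'.le,
        div_eq_inv_mul]
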